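/- arXiv:2104.01415 — 2 statements merged into one kernel-verified Lean document; each statement's English description precedes it below -/
import Mathlib

section
/- The dual weights w* are related to the weights w by conjugation: w*_{u;s}(i,l;k,j) = s^{-2l} · [(q;q)_i/(s²;q)_i] · [(s²;q)_k/(q;q)_k] · w_{u;s}(k,j;i,l) for all i,k ∈ ℤ_{≥0} and j,l ∈ {0,1}. -/
/-- The q-Pochhammer symbol `(x;q)_n = ∏_{i=1}^n (1 - x q^{i-1})`. -/
noncomputable def qp (q x : ℂ) (n : ℕ) : ℂ := ∏ r ∈ Finset.range n, (1 - x * q ^ r)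

/-- Higher spin vertex weights `w_{u;s}(i,j;k,l)`: bottom `i`, left `j`, top `k`,
right `l`; zero unless `i + j = k + l` with `j,l ∈ {0,1}`. -/
noncomputable def whs (q u s : ℂ) (i j k l : ℕ) : ℂ :=
  if j = 0 ∧ l = 0 ∧ k = i then (1 - s * u * q ^ i) / (1 - s * u)
  else if j = 0 ∧ l = 1 ∧ k + 1 = i then (q ^ i - 1) * s * u / (1 - s * u)
  else if j = 1 ∧ l = 0 ∧ k = i + 1 then (1 - s ^ 2 * q ^ i) / (1 - s * u)
  else if j = 1 ∧ l = 1 ∧ k = i then (s ^ 2 * q ^ i - s * u) / (1 - s * u)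
  else 0

/-- Dual higher spin vertex weights `w*_{u;s}`: bottom `i`, left `j`, top `k`,
right `l`; zero unless `i + l = k + j` with `j,l ∈ {0,1}`. -/
noncomputable def whsDual (q u s : ℂ) (i j k l : ℕ) : ℂ :=
  if j = 0 ∧ l = 0 ∧ k = i then (1 - s * u * q ^ i) / (1 - s * u)
  else if j = 0 ∧ l = 1 ∧ k = i + 1 then (-(s⁻¹ * u) * (1 - s ^ 2 * q ^ i)) / (1 - s * u)
  else if j = 1 ∧ l = 0 ∧ k + 1 = i then (1 - q ^ i) / (1 - s * u)
  else if j = 1 ∧ l = 1 ∧ k = i then (q ^ i - s⁻¹ * u) / (1 - s * u)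
  else 0

lemma qp_succ (q x : ℂ) (n : ℕ) : qp q x (n + 1) = qp q x n * (1 - x * q ^ n) :=
  Finset.prod_range_succ _ _

/-- Conjugation relation between dual and ordinary higher spin weights:
`w*_{u;s}(i,l;k,j) = s^{-2l} (q;q)_i/(s²;q)_i · (s²;q)_k/(q;q)_k · w_{u;s}(k,j;i,l)`. -/
theorem stmt6 (q u s : ℂ) (hs : s ≠ 0) (hsu : s * u ≠ 1)
    (i k : ℕ) (j l : ℕ) (hj : j ≤ 1) (hl : l ≤ 1)
    (h1 : qp q (s ^ 2) i ≠ 0) (h2 : qp q q k ≠ 0) :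
    whsDual q u s i j k l
      = (s⁻¹) ^ (2 * l) * (qp q q i / qp q (s ^ 2) i) * (qp q (s ^ 2) k / qp q q k) *
          whs q u s k j i l := by
  have hsu' : (1 : ℂ) - s * u ≠ 0 := sub_ne_zero.mpr (Ne.symm hsu)
  interval_cases j <;> interval_cases l
  · -- j = 0, l = 0
    by_cases hk : k = i
    · subst hk
      simp only [whsDual, whs]
      rw [if_pos (by simp), if_pos (by simp)]
      have hr : qp q q k / qp q (s ^ 2) k * (qp q (s ^ 2) k / qp q q k) = 1 := by
        field_simp
      rw [show ((s⁻¹ : ℂ)) ^ (2 * 0) = 1 by norm_num, one_mul, hr, one_mul]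
    · simp [whsDual, whs, hk, Ne.symm hk]
  · -- j = 0, l = 1
    by_cases hk : k = i + 1
    · subst hk
      rw [qp_succ] at h2
      obtain ⟨hA, hB⟩ := mul_ne_zero_iff.mp h2
      simp only [whsDual, whs]
      rw [if_neg (by simp), if_pos (by simp), if_neg (by simp), if_pos (by simp)]
      rw [qp_succ q (s ^ 2) i, qp_succ q q i]
      have hr : qp q q i / qp q (s ^ 2) i *
            (qp q (s ^ 2) i * (1 - s ^ 2 * q ^ i) / (qp q q i * (1 - q * q ^ i)))
          = (1 - s ^ 2 * q ^ i) / (1 - q * q ^ i) := by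
        field_simp
      rw [mul_assoc ((s⁻¹ : ℂ) ^ (2 * 1)), hr,
        mul_assoc ((s⁻¹ : ℂ) ^ (2 * 1)), pow_succ q i]
      have hB' : 1 - q ^ i * q ≠ 0 := by rwa [mul_comm] at hB
      rw [Nat.mul_one]
      field_simp
      ring
    · have hk' : ¬ (i + 1 = k) := fun h => hk h.symm
      simp [whsDual, whs, hk, hk']
  · -- j = 1, l = 0
    by_cases hk : i = k + 1
    · subst hk
      rw [qp_succ] at h1
      obtain ⟨hA, hB⟩ := mul_ne_zero_iff.mp h1
      simp only [whsDual, whs]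
      rw [if_neg (by simp), if_neg (by simp), if_pos (by simp),
        if_neg (by simp), if_neg (by simp), if_pos (by simp)]
      rw [qp_succ q (s ^ 2) k, qp_succ q q k]
      rw [show ((s⁻¹ : ℂ)) ^ (2 * 0) = 1 by norm_num, one_mul]
      have hr : qp q q k * (1 - q * q ^ k) / (qp q (s ^ 2) k * (1 - s ^ 2 * q ^ k)) *
            (qp q (s ^ 2) k / qp q q k)
          = (1 - q * q ^ k) / (1 - s ^ 2 * q ^ k) := by
        field_simp
      rw [hr, pow_succ q k]
      have hB' : 1 - q ^ k * s ^ 2 ≠ 0 := by rwa [mul_comm] at hB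
      field_simp
    · have hk' : ¬ (k + 1 = i) := fun h => hk h.symm
      simp [whsDual, whs, hk, hk']
  · -- j = 1, l = 1
    by_cases hk : k = i
    · subst hk
      simp only [whsDual, whs]
      rw [if_neg (by simp), if_neg (by simp), if_neg (by simp), if_pos (by simp),
        if_neg (by simp), if_neg (by simp), if_neg (by simp), if_pos (by simp)]
      have hr : qp q q k / qp q (s ^ 2) k * (qp q (s ^ 2) k / qp q q k) = 1 := by
        field_simp
      rw [mul_assoc ((s⁻¹ : ℂ) ^ (2 * 1)), hr, mul_one]
      rw [Nat.mul_one]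
      field_simp
    · simp [whsDual, whs, hk, Ne.symm hk]
end

section
/- One-variable skew inhomogeneous spin q-Whittaker function: if μ ≺ λ (i.e., λ_1 ≥ μ_1 ≥ λ_2 ≥ μ_2 ≥ ...), then 𝔽_{λ/μ}(κ | Ξ, S) = (-κ)^{|λ|-|μ|} Π_{i≥1} ξ_{i-1}^{μ_i - λ_i} (s_i ξ_i / (s_{i-1} ξ_{i-1}))^{μ_i/2} · (κ^{-1}s_iξ_i;q)_{λ_i-μ_i} (κ s_i/ξ_i;q)_{μ_i-λ_{i+1}} (q;q)_{λ_i-λ_{i+1}} / [(q;q)_{λ_i-μ_i} (q;q)_{μ_i-λ_{i+1}} (s_i²;q)_{λ_i-λ_{i+1}}]; otherwise 𝔽_{λ/μ}(κ | Ξ, S) = 0. -/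
/-- The q-Hahn vertex weight `W_{t,s}(i,j;k,l)` with `t² = t2`, `s² = s2`, allowing
integer labels: the weight vanishes unless all labels are nonnegative,
the conservation law `i+j=k+l` holds, and `l ≤ i`. -/
noncomputable def Wz (q t2 s2 : ℂ) (i j k l : ℤ) : ℂ :=
  if 0 ≤ i ∧ 0 ≤ j ∧ 0 ≤ l ∧ i + j = k + l ∧ l ≤ i then
    (s2 / t2) ^ l.toNat * qp q (s2 / t2) (i - l).toNat * qp q t2 l.toNat / qp q s2 i.toNat *
      (qp q q i.toNat / (qp q q (i - l).toNat * qp q q l.toNat))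
  else 0

/-- The one-variable skew inhomogeneous spin q-Whittaker function
`𝔽_{λ/μ}(κ | Ξ, S)`.  Here `a j` and `b j` are fixed square roots of `s_j` and `ξ_j`
(so `s_j = (a j)²`, `ξ_j = (b j)²`), `lam i = λ_{i+1}` and `mu i = μ_{i+1}` are the
(0-indexed) parts of the partitions, `s_j^{(1)} = a j · a (j+1) · b (j+1) / b j`.
It is defined as
`[(-τ_Ξ S)^μ/(-S)^λ]·[c_{τ_Ξ S}(μ)/c_S(λ)]·(κ s₀/ξ₀)^{λ₁-μ₁}
 (κ⁻¹s₁ξ₁;q)_{λ₁-μ₁}/(q;q)_{λ₁-μ₁}·ZW_{λ/μ}(κ)`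
with `ZW_{λ/μ}(κ) = ∏_{c≥1} W_{√(s_{c+1}ξ_{c+1}/κ), s_c^{(1)}}
 (m_c(μ'), λ_c-μ_c; m_c(λ'), λ_{c+1}-μ_{c+1})`. -/
noncomputable def F1 (q κ : ℂ) (a b : ℕ → ℂ) (lam mu : ℕ → ℕ) : ℂ :=
  ((∏' i : ℕ, (-(a i * a (i + 1) * b (i + 1) / b i)) ^ mu i) /
      (∏' i : ℕ, (-((a i) ^ 2)) ^ lam i)) *
  ((∏' i : ℕ, qp q ((a (i + 1) * a (i + 2) * b (i + 2) / b (i + 1)) ^ 2) (mu i - mu (i + 1)) /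
        qp q q (mu i - mu (i + 1))) /
     (∏' i : ℕ, qp q ((a (i + 1)) ^ 4) (lam i - lam (i + 1)) / qp q q (lam i - lam (i + 1)))) *
  ((κ * (a 0) ^ 2 / (b 0) ^ 2) ^ (lam 0 - mu 0) *
      qp q (κ⁻¹ * (a 1) ^ 2 * (b 1) ^ 2) (lam 0 - mu 0) / qp q q (lam 0 - mu 0)) *
  ∏' c : ℕ, Wz q ((a (c + 2)) ^ 2 * (b (c + 2)) ^ 2 / κ)
      ((a (c + 1) * a (c + 2) * b (c + 2) / b (c + 1)) ^ 2)
      ((mu c : ℤ) - (mu (c + 1) : ℤ)) ((lam c : ℤ) - (mu c : ℤ))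
      ((lam c : ℤ) - (lam (c + 1) : ℤ)) ((lam (c + 1) : ℤ) - (mu (c + 1) : ℤ))

set_option maxHeartbeats 1000000

lemma qp_zero (q x : ℂ) : qp q x 0 = 1 := by simp [qp]

lemma qp_q_ne_zero {q : ℂ} (hq : ∀ n : ℕ, 1 ≤ n → q ^ n ≠ 1) (n : ℕ) : qp q q n ≠ 0 := by
  rw [qp, Finset.prod_ne_zero_iff]
  intro r _
  have h : q * q ^ r = q ^ (r + 1) := by ring
  rw [h]
  exact sub_ne_zero_of_ne fun h => hq (r+1) (by omega) h.symm

lemma cancel_aux (u v w z : ℂ) (hv : v ≠ 0) (m d : ℕ) :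
    u ^ m * v ^ m / (v ^ m * v ^ d) * (w ^ d * z ^ d * v ^ d) = w ^ d * z ^ d * u ^ m := by
  have hvm : v ^ m ≠ 0 := pow_ne_zero _ hv
  have hvd : v ^ d ≠ 0 := pow_ne_zero _ hv
  field_simp

lemma abstract (x1 y1 z1 K qS qef qA1 qde c1 qd s1 c2 s3 qe qf : ℂ)
    (hqS : qS ≠ 0) (hqef : qef ≠ 0) (hqA1 : qA1 ≠ 0) (hqde : qde ≠ 0)
    (hqd : qd ≠ 0) (hqe : qe ≠ 0) (hqf : qf ≠ 0)
    (hkey : x1 / y1 * z1 = K) :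
    x1 / y1 * (qS / qef / (qA1 / qde)) * (z1 * c1 / qd) *
      (s1 * c2 * s3 / qS * (qef / (qe * qf)))
    = K * c1 * c2 * qde / (qd * qe * qA1) * (s1 * s3 / qf) := by
  have h : x1 / y1 * (qS / qef / (qA1 / qde)) * (z1 * c1 / qd) *
      (s1 * c2 * s3 / qS * (qef / (qe * qf)))
    = (x1 / y1 * z1) * ((qS / qef / (qA1 / qde)) * (c1 / qd) *
        (s1 * c2 * s3 / qS * (qef / (qe * qf)))) := by ring
  rw [h, hkey]
  field_simp

lemma core (q κ A0 A1 A2 B0 B1 B2 : ℂ)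
    (hA0 : A0 ≠ 0) (hA1 : A1 ≠ 0) (hA2 : A2 ≠ 0)
    (hB0 : B0 ≠ 0) (hB1 : B1 ≠ 0) (hB2 : B2 ≠ 0) (hκ : κ ≠ 0)
    (hq : ∀ n : ℕ, 1 ≤ n → q ^ n ≠ 1)
    (hsA1 : ∀ n, qp q (A1^4) n ≠ 0)
    (hsS : ∀ n, qp q ((A1*A2*B2/B1)^2) n ≠ 0)
    (l0 m0 l1 m1 : ℕ) (h1 : m1 ≤ l1) (h2 : l1 ≤ m0) (h3 : m0 ≤ l0) :
    ((-(A0*A1*B1/B0)) ^ m0 / (-(A0^2)) ^ l0) *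
    ((qp q ((A1*A2*B2/B1)^2) (m0 - m1) / qp q q (m0 - m1)) /
       (qp q (A1^4) (l0 - l1) / qp q q (l0 - l1))) *
    ((κ * A0^2 / B0^2) ^ (l0 - m0) * qp q (κ⁻¹ * A1^2 * B1^2) (l0 - m0) / qp q q (l0 - m0)) *
    Wz q (A2^2 * B2^2 / κ) ((A1*A2*B2/B1)^2) ((m0:ℤ) - (m1:ℤ)) ((l0:ℤ) - (m0:ℤ)) ((l0:ℤ) - (l1:ℤ)) ((l1:ℤ) - (m1:ℤ))
    = ((-κ) ^ (l0 - m0) * (B0^2 : ℂ) ^ ((m0:ℤ) - (l0:ℤ)) * (A1*B1/(A0*B0)) ^ m0 *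
        qp q (κ⁻¹ * A1^2 * B1^2) (l0 - m0) * qp q (κ * A1^2 / B1^2) (m0 - l1) *
        qp q q (l0 - l1) /
        (qp q q (l0 - m0) * qp q q (m0 - l1) * qp q (A1^4) (l0 - l1))) *
      ((κ * A1^2 / B1^2) ^ (l1 - m1) * qp q (κ⁻¹ * A2^2 * B2^2) (l1 - m1) / qp q q (l1 - m1)) := by
  have hq1 := qp_q_ne_zero hq
  have hB02 : (B0:ℂ)^2 ≠ 0 := pow_ne_zero _ hB0
  have hnA02 : (-(A0^2) : ℂ) ≠ 0 := by simpa using pow_ne_zero 2 hA0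
  obtain ⟨f, rfl⟩ : ∃ f, l1 = m1 + f := ⟨l1 - m1, by omega⟩
  obtain ⟨e, rfl⟩ : ∃ e, m0 = m1 + f + e := ⟨m0 - (m1+f), by omega⟩
  obtain ⟨d, rfl⟩ : ∃ d, l0 = m1 + f + e + d := ⟨l0 - (m1+f+e), by omega⟩
  have e1 : m1 + f + e - m1 = e + f := by omega
  have e2 : m1 + f + e + d - (m1 + f) = d + e := by omega
  have e3 : m1 + f + e + d - (m1 + f + e) = d := by omega
  have e4 : m1 + f + e - (m1 + f) = e := by omega
  have e5 : m1 + f - m1 = f := by omega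
  rw [e1, e2, e3, e4, e5]
  rw [Wz, if_pos (⟨by omega, by omega, by omega, by push_cast; ring, by omega⟩ : _ ∧ _ ∧ _ ∧ _ ∧ _)]
  have t1 : (((m1 + f + e : ℕ):ℤ) - (m1:ℤ)).toNat = e + f := by omega
  have t2 : (((m1 + f + e : ℕ):ℤ) - (m1:ℤ) - (((m1+f:ℕ):ℤ) - (m1:ℤ))).toNat = e := by omega
  have t3 : ((((m1 + f:ℕ)):ℤ) - (m1:ℤ)).toNat = f := by omega
  rw [t1, t2, t3]
  have hst : ((A1*A2*B2/B1)^2) / (A2^2 * B2^2 / κ) = κ * A1^2 / B1^2 := by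
    field_simp
  rw [hst]
  have hA22 : A2^2 * B2^2 / κ = κ⁻¹ * A2^2 * B2^2 := by ring
  rw [hA22]
  have hz : ((B0^2 : ℂ)) ^ (((m1 + f + e:ℕ):ℤ) - ((m1 + f + e + d:ℕ):ℤ)) = ((B0^2)⁻¹) ^ d := by
    have h : (((m1 + f + e:ℕ):ℤ) - ((m1 + f + e + d:ℕ):ℤ)) = -(d:ℤ) := by omega
    rw [h, zpow_neg, zpow_natCast, inv_pow]
  rw [hz]
  have key0 : (-(A0*A1*B1/B0)) ^ (m1+f+e) / (-(A0^2)) ^ (m1+f+e+d) * (κ * A0^2 / B0^2) ^ d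
      = (-κ) ^ d * ((B0^2)⁻¹) ^ d * (A1*B1/(A0*B0)) ^ (m1+f+e) := by
    have hb : (-(A0*A1*B1/B0)) = (A1*B1/(A0*B0)) * (-(A0^2)) := by field_simp
    have hc : (κ * A0^2 / B0^2) = (-κ) * (B0^2)⁻¹ * (-(A0^2)) := by field_simp
    rw [hb, hc, mul_pow, mul_pow, mul_pow, pow_add (-(A0^2)) (m1+f+e) d]
    exact cancel_aux (A1*B1/(A0*B0)) (-(A0^2)) (-κ) ((B0^2)⁻¹) hnA02 (m1+f+e) d
  exact abstract ((-(A0*A1*B1/B0)) ^ (m1+f+e)) ((-(A0^2)) ^ (m1+f+e+d)) ((κ * A0^2 / B0^2) ^ d)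
    ((-κ) ^ d * ((B0^2)⁻¹) ^ d * (A1*B1/(A0*B0)) ^ (m1+f+e))
    (qp q ((A1*A2*B2/B1)^2) (e+f)) (qp q q (e+f)) (qp q (A1^4) (d+e)) (qp q q (d+e))
    (qp q (κ⁻¹ * A1^2 * B1^2) d) (qp q q d) ((κ * A1^2 / B1^2) ^ f)
    (qp q (κ * A1^2 / B1^2) e) (qp q (κ⁻¹ * A2^2 * B2^2) f) (qp q q e) (qp q q f)
    (hsS _) (hq1 _) (hsA1 _) (hq1 _) (hq1 _) (hq1 _) (hq1 _) key0

lemma step_alg (S1 S1d S2 S2d SW t1 t1d t2 t2d P3 w Rt0 P3' RtS : ℂ)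
    (key : t1 / t1d * (t2 / t2d) * P3 * w = Rt0 * P3')
    (ih : S1 / S1d * (S2 / S2d) * P3' * SW = RtS) :
    S1 * t1 / (S1d * t1d) * (S2 * t2 / (S2d * t2d)) * P3 * (SW * w) = RtS * Rt0 := by
  rw [← ih]
  have h : S1 * t1 / (S1d * t1d) * (S2 * t2 / (S2d * t2d)) * P3 * (SW * w)
      = (S1 / S1d * (S2 / S2d) * SW) * (t1 / t1d * (t2 / t2d) * P3 * w) := by
    field_simp
  rw [h, key]
  ring

noncomputable def f1n (a b : ℕ → ℂ) (mu : ℕ → ℕ) (i : ℕ) : ℂ :=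
  (-(a i * a (i + 1) * b (i + 1) / b i)) ^ mu i

noncomputable def f1d (a : ℕ → ℂ) (lam : ℕ → ℕ) (i : ℕ) : ℂ := (-((a i) ^ 2)) ^ lam i

noncomputable def f2n (q : ℂ) (a b : ℕ → ℂ) (mu : ℕ → ℕ) (i : ℕ) : ℂ :=
  qp q ((a (i + 1) * a (i + 2) * b (i + 2) / b (i + 1)) ^ 2) (mu i - mu (i + 1)) /
    qp q q (mu i - mu (i + 1))

noncomputable def f2d (q : ℂ) (a : ℕ → ℂ) (lam : ℕ → ℕ) (i : ℕ) : ℂ :=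
  qp q ((a (i + 1)) ^ 4) (lam i - lam (i + 1)) / qp q q (lam i - lam (i + 1))

noncomputable def fP3 (q κ : ℂ) (a b : ℕ → ℂ) (lam mu : ℕ → ℕ) : ℂ :=
  (κ * (a 0) ^ 2 / (b 0) ^ 2) ^ (lam 0 - mu 0) *
    qp q (κ⁻¹ * (a 1) ^ 2 * (b 1) ^ 2) (lam 0 - mu 0) / qp q q (lam 0 - mu 0)

noncomputable def fW (q κ : ℂ) (a b : ℕ → ℂ) (lam mu : ℕ → ℕ) (c : ℕ) : ℂ :=
  Wz q ((a (c + 2)) ^ 2 * (b (c + 2)) ^ 2 / κ)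
    ((a (c + 1) * a (c + 2) * b (c + 2) / b (c + 1)) ^ 2)
    ((mu c : ℤ) - (mu (c + 1) : ℤ)) ((lam c : ℤ) - (mu c : ℤ))
    ((lam c : ℤ) - (lam (c + 1) : ℤ)) ((lam (c + 1) : ℤ) - (mu (c + 1) : ℤ))

noncomputable def Rt (q κ : ℂ) (a b : ℕ → ℂ) (lam mu : ℕ → ℕ) (t : ℕ) : ℂ :=
  (-κ) ^ (lam t - mu t) * ((b t) ^ 2 : ℂ) ^ ((mu t : ℤ) - (lam t : ℤ)) *
    ((a (t + 1) * b (t + 1)) / (a t * b t)) ^ mu t *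
    qp q (κ⁻¹ * (a (t + 1)) ^ 2 * (b (t + 1)) ^ 2) (lam t - mu t) *
    qp q (κ * (a (t + 1)) ^ 2 / (b (t + 1)) ^ 2) (mu t - lam (t + 1)) *
    qp q q (lam t - lam (t + 1)) /
    (qp q q (lam t - mu t) * qp q q (mu t - lam (t + 1)) *
      qp q ((a (t + 1)) ^ 4) (lam t - lam (t + 1)))

noncomputable def LHSfin (q κ : ℂ) (a b : ℕ → ℂ) (lam mu : ℕ → ℕ) (N : ℕ) : ℂ :=
  ((∏ i ∈ Finset.range N, f1n a b mu i) / (∏ i ∈ Finset.range N, f1d a lam i)) *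
  ((∏ i ∈ Finset.range N, f2n q a b mu i) / (∏ i ∈ Finset.range N, f2d q a lam i)) *
  fP3 q κ a b lam mu * (∏ c ∈ Finset.range N, fW q κ a b lam mu c)

lemma mainind (q κ : ℂ) (hκ : κ ≠ 0) (hq : ∀ n : ℕ, 1 ≤ n → q ^ n ≠ 1) :
    ∀ (N : ℕ) (a b : ℕ → ℂ) (lam mu : ℕ → ℕ),
      (∀ j, a j ≠ 0) → (∀ j, b j ≠ 0) →
      (∀ j n, qp q ((a j) ^ 4) n ≠ 0) →
      (∀ j n, qp q ((a j * a (j + 1) * b (j + 1) / b j) ^ 2) n ≠ 0) →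
      (∀ i, mu i ≤ lam i ∧ lam (i + 1) ≤ mu i) →
      (∀ i, N ≤ i → lam i = 0) →
      LHSfin q κ a b lam mu N = ∏ t ∈ Finset.range N, Rt q κ a b lam mu t := by
  intro N
  induction N with
  | zero =>
    intro a b lam mu ha hb hs hs1 hint hN
    have h0 : lam 0 = 0 := hN 0 (le_refl 0)
    have hm0 : mu 0 = 0 := by have := (hint 0).1; omega
    simp [LHSfin, fP3, h0, hm0, qp_zero]
  | succ N IH =>
    intro a b lam mu ha hb hs hs1 hint hN
    have IH' := IH (fun i => a (i+1)) (fun i => b (i+1)) (fun i => lam (i+1)) (fun i => mu (i+1))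
        (fun j => ha (j+1)) (fun j => hb (j+1)) (fun j n => hs (j+1) n) (fun j n => hs1 (j+1) n)
        (fun i => hint (i+1)) (fun i hi => hN (i+1) (by omega))
    have key : f1n a b mu 0 / f1d a lam 0 * (f2n q a b mu 0 / f2d q a lam 0) *
        fP3 q κ a b lam mu * fW q κ a b lam mu 0
        = Rt q κ a b lam mu 0 *
          fP3 q κ (fun i => a (i+1)) (fun i => b (i+1)) (fun i => lam (i+1)) (fun i => mu (i+1)) := by
      simp only [f1n, f1d, f2n, f2d, fP3, fW, Rt, zero_add]
      exact core q κ (a 0) (a 1) (a 2) (b 0) (b 1) (b 2) (ha 0) (ha 1) (ha 2) (hb 0) (hb 1)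
        (hb 2) hκ hq (hs 1) (hs1 1) (lam 0) (mu 0) (lam 1) (mu 1) (hint 1).1 (hint 0).2 (hint 0).1
    have IH'' : (∏ i ∈ Finset.range N, f1n a b mu (i+1)) / (∏ i ∈ Finset.range N, f1d a lam (i+1)) *
        ((∏ i ∈ Finset.range N, f2n q a b mu (i+1)) / (∏ i ∈ Finset.range N, f2d q a lam (i+1))) *
        fP3 q κ (fun i => a (i+1)) (fun i => b (i+1)) (fun i => lam (i+1)) (fun i => mu (i+1)) *
        (∏ c ∈ Finset.range N, fW q κ a b lam mu (c+1))
        = ∏ t ∈ Finset.range N, Rt q κ a b lam mu (t+1) := IH'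
    rw [LHSfin, Finset.prod_range_succ' (f1n a b mu), Finset.prod_range_succ' (f1d a lam),
      Finset.prod_range_succ' (f2n q a b mu), Finset.prod_range_succ' (f2d q a lam),
      Finset.prod_range_succ' (fW q κ a b lam mu), Finset.prod_range_succ' (Rt q κ a b lam mu)]
    exact step_alg _ _ _ _ _ _ _ _ _ _ _ _ _ _ key IH''

lemma Wz_trivial (q t2 s2 : ℂ) : Wz q t2 s2 0 0 0 0 = 1 := by
  rw [Wz, if_pos ⟨le_refl 0, le_refl 0, le_refl 0, rfl, le_refl 0⟩]
  simp [qp_zero]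

lemma F1_eq_LHSfin (q κ : ℂ) (a b : ℕ → ℂ) (lam mu : ℕ → ℕ) (N : ℕ)
    (hNl : ∀ i, N ≤ i → lam i = 0) (hNm : ∀ i, N ≤ i → mu i = 0) :
    F1 q κ a b lam mu = LHSfin q κ a b lam mu N := by
  have hge : ∀ i : ℕ, i ∉ Finset.range N → N ≤ i := by
    intro i hi; simpa [Finset.mem_range, not_lt] using hi
  have e1 : (∏' i : ℕ, (-(a i * a (i + 1) * b (i + 1) / b i)) ^ mu i)
      = ∏ i ∈ Finset.range N, f1n a b mu i := by
    refine tprod_eq_prod ?_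
    intro i hi
    simp [f1n, hNm i (hge i hi)]
  have e2 : (∏' i : ℕ, (-((a i) ^ 2)) ^ lam i) = ∏ i ∈ Finset.range N, f1d a lam i := by
    refine tprod_eq_prod ?_
    intro i hi
    simp [f1d, hNl i (hge i hi)]
  have e3 : (∏' i : ℕ, qp q ((a (i + 1) * a (i + 2) * b (i + 2) / b (i + 1)) ^ 2)
        (mu i - mu (i + 1)) / qp q q (mu i - mu (i + 1)))
      = ∏ i ∈ Finset.range N, f2n q a b mu i := by
    refine tprod_eq_prod ?_
    intro i hi
    simp [f2n, hNm i (hge i hi), hNm (i+1) (by have := hge i hi; omega), qp_zero]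
  have e4 : (∏' i : ℕ, qp q ((a (i + 1)) ^ 4) (lam i - lam (i + 1)) /
        qp q q (lam i - lam (i + 1)))
      = ∏ i ∈ Finset.range N, f2d q a lam i := by
    refine tprod_eq_prod ?_
    intro i hi
    simp [f2d, hNl i (hge i hi), hNl (i+1) (by have := hge i hi; omega), qp_zero]
  have e5 : (∏' c : ℕ, Wz q ((a (c + 2)) ^ 2 * (b (c + 2)) ^ 2 / κ)
        ((a (c + 1) * a (c + 2) * b (c + 2) / b (c + 1)) ^ 2)
        ((mu c : ℤ) - (mu (c + 1) : ℤ)) ((lam c : ℤ) - (mu c : ℤ))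
        ((lam c : ℤ) - (lam (c + 1) : ℤ)) ((lam (c + 1) : ℤ) - (mu (c + 1) : ℤ)))
      = ∏ c ∈ Finset.range N, fW q κ a b lam mu c := by
    refine tprod_eq_prod ?_
    intro i hi
    have h1 : lam i = 0 := hNl i (hge i hi)
    have h2 : lam (i+1) = 0 := hNl (i+1) (by have := hge i hi; omega)
    have h3 : mu i = 0 := hNm i (hge i hi)
    have h4 : mu (i+1) = 0 := hNm (i+1) (by have := hge i hi; omega)
    rw [h1, h2, h3, h4]
    simpa using Wz_trivial q ((a (i + 2)) ^ 2 * (b (i + 2)) ^ 2 / κ)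
      ((a (i + 1) * a (i + 2) * b (i + 2) / b (i + 1)) ^ 2)
  rw [F1, e1, e2, e3, e4, e5]
  rfl

lemma Rt_tprod (q κ : ℂ) (a b : ℕ → ℂ) (lam mu : ℕ → ℕ) (N : ℕ)
    (hNl : ∀ i, N ≤ i → lam i = 0) (hNm : ∀ i, N ≤ i → mu i = 0) :
    (∏' t : ℕ,
        ((-κ) ^ (lam t - mu t) * ((b t) ^ 2 : ℂ) ^ ((mu t : ℤ) - (lam t : ℤ)) *
          ((a (t + 1) * b (t + 1)) / (a t * b t)) ^ mu t *
          qp q (κ⁻¹ * (a (t + 1)) ^ 2 * (b (t + 1)) ^ 2) (lam t - mu t) *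
          qp q (κ * (a (t + 1)) ^ 2 / (b (t + 1)) ^ 2) (mu t - lam (t + 1)) *
          qp q q (lam t - lam (t + 1)) /
          (qp q q (lam t - mu t) * qp q q (mu t - lam (t + 1)) *
            qp q ((a (t + 1)) ^ 4) (lam t - lam (t + 1)))))
      = ∏ t ∈ Finset.range N, Rt q κ a b lam mu t := by
  refine tprod_eq_prod ?_
  intro i hi
  have hge : N ≤ i := by simpa [Finset.mem_range, not_lt] using hi
  have h1 : lam i = 0 := hNl i hge
  have h2 : lam (i+1) = 0 := hNl (i+1) (by omega)
  have h3 : mu i = 0 := hNm i hge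
  rw [h1, h2, h3]
  simp [qp_zero]

/-- One-variable formula: if `μ ≺ λ` (interlacing) then `𝔽_{λ/μ}(κ|Ξ,S)` factorizes as
`(-κ)^{|λ|-|μ|} ∏_{i≥1} ξ_{i-1}^{μ_i-λ_i} (s_iξ_i/(s_{i-1}ξ_{i-1}))^{μ_i/2}
 (κ⁻¹s_iξ_i;q)_{λ_i-μ_i}(κ s_i/ξ_i;q)_{μ_i-λ_{i+1}}(q;q)_{λ_i-λ_{i+1}}
 /[(q;q)_{λ_i-μ_i}(q;q)_{μ_i-λ_{i+1}}(s_i²;q)_{λ_i-λ_{i+1}}]`,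
and otherwise `𝔽_{λ/μ}(κ|Ξ,S) = 0`.  (The factor `(-κ)^{|λ|-|μ|}` is distributed into
the product as `(-κ)^{λ_i-μ_i}`.) -/
theorem stmt8 (q κ : ℂ) (a b : ℕ → ℂ) (lam mu : ℕ → ℕ)
    (hlam : ∀ i, lam (i + 1) ≤ lam i) (hmu : ∀ i, mu (i + 1) ≤ mu i)
    (hlam0 : ∃ N, ∀ i, N ≤ i → lam i = 0) (hmu0 : ∃ N, ∀ i, N ≤ i → mu i = 0)
    (ha : ∀ j, a j ≠ 0) (hb : ∀ j, b j ≠ 0) (hκ : κ ≠ 0)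
    (hq : ∀ n : ℕ, 1 ≤ n → q ^ n ≠ 1)
    (hs : ∀ j n, qp q ((a j) ^ 4) n ≠ 0)
    (hs1 : ∀ j n, qp q ((a j * a (j + 1) * b (j + 1) / b j) ^ 2) n ≠ 0) :
    ((∀ i, mu i ≤ lam i ∧ lam (i + 1) ≤ mu i) →
      F1 q κ a b lam mu
        = ∏' t : ℕ,
            ((-κ) ^ (lam t - mu t) * ((b t) ^ 2 : ℂ) ^ ((mu t : ℤ) - (lam t : ℤ)) *
              ((a (t + 1) * b (t + 1)) / (a t * b t)) ^ mu t *
              qp q (κ⁻¹ * (a (t + 1)) ^ 2 * (b (t + 1)) ^ 2) (lam t - mu t) *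
              qp q (κ * (a (t + 1)) ^ 2 / (b (t + 1)) ^ 2) (mu t - lam (t + 1)) *
              qp q q (lam t - lam (t + 1)) /
              (qp q q (lam t - mu t) * qp q q (mu t - lam (t + 1)) *
                qp q ((a (t + 1)) ^ 4) (lam t - lam (t + 1))))) ∧
    ((¬ ∀ i, mu i ≤ lam i ∧ lam (i + 1) ≤ mu i) → F1 q κ a b lam mu = 0) := by
  obtain ⟨N1, hN1⟩ := hlam0
  obtain ⟨N2, hN2⟩ := hmu0
  set N := max N1 N2 with hN
  have hNl : ∀ i, N ≤ i → lam i = 0 := fun i hi => hN1 i (le_trans (le_max_left _ _) hi)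
  have hNm : ∀ i, N ≤ i → mu i = 0 := fun i hi => hN2 i (le_trans (le_max_right _ _) hi)
  constructor
  · intro hint
    rw [F1_eq_LHSfin q κ a b lam mu N hNl hNm, Rt_tprod q κ a b lam mu N hNl hNm]
    exact mainind q κ hκ hq N a b lam mu ha hb hs hs1 hint hNl
  · intro hfail
    push_neg at hfail
    obtain ⟨i₀, hi₀⟩ := hfail
    set M := max N (i₀ + 1) with hM
    have hMl : ∀ i, M ≤ i → lam i = 0 := fun i hi => hNl i (le_trans (le_max_left _ _) hi)
    have hMm : ∀ i, M ≤ i → mu i = 0 := fun i hi => hNm i (le_trans (le_max_left _ _) hi)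
    rw [F1_eq_LHSfin q κ a b lam mu M hMl hMm, LHSfin]
    have hW0 : fW q κ a b lam mu i₀ = 0 := by
      rw [fW, Wz, if_neg]
      rintro ⟨c1, c2, c3, c4, c5⟩
      rcases le_or_gt (mu i₀) (lam i₀) with h | h
      · exact absurd (hi₀ h) (by omega)
      · omega
    rw [Finset.prod_eq_zero (Finset.mem_range.mpr (by omega : i₀ < M)) hW0, mul_zero]
end
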